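/- The 1-form η = (1/√(1-r²))(x₆dx₁ + x₅dx₂ + x₄dx₃ - x₃dx₄ - x₂dx₅ - x₁dx₆) on M_r satisfies dη = -(2/√(1-r²))(dx₁∧dx₆ + dx₂∧dx₅ + dx₃∧dx₄), and η ∧ (dη)² is nowhere zero on M_r; hence η is a contact form on M_r. -/

import Mathlib

/- Common setup: ℝ⁷ ≅ pure imaginary octonions 𝔆₊ (0-based indices: eᵢ ↦ i-1),
   octonion cross product x × y = xy + ⟨x,y⟩·1 given by the Fano triples
   (e₁e₂=e₃, e₁e₄=e₅, e₁e₆=e₇, e₂e₅=e₇, e₃e₄=e₇, e₃e₅=e₆, e₂e₆=e₄),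
   the hypersurfaces M_r = S⁶ ∩ {x₇ = r}, the unit normal ν of M_r in S⁶,
   the vector field ξ = -N × ν, its dual 1-form η and dη
   (with the convention dη(X,Y) = ½(Xη(Y) - Yη(X) - η([X,Y]))). -/

noncomputable section

open scoped RealInnerProductSpace

abbrev E7 : Type := EuclideanSpace ℝ (Fin 7)
abbrev E6 : Type := EuclideanSpace ℝ (Fin 6)

/-- Octonion cross product on pure imaginary octonions 𝔆₊ ≅ ℝ⁷. -/
def cross (u v : E7) : E7 := WithLp.toLp 2 fun k =>
  if k = 0 then u 1 * v 2 - u 2 * v 1 + (u 3 * v 4 - u 4 * v 3) + (u 5 * v 6 - u 6 * v 5)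
  else if k = 1 then u 2 * v 0 - u 0 * v 2 + (u 4 * v 6 - u 6 * v 4) + (u 5 * v 3 - u 3 * v 5)
  else if k = 2 then u 0 * v 1 - u 1 * v 0 + (u 3 * v 6 - u 6 * v 3) + (u 4 * v 5 - u 5 * v 4)
  else if k = 3 then u 4 * v 0 - u 0 * v 4 + (u 6 * v 2 - u 2 * v 6) + (u 1 * v 5 - u 5 * v 1)
  else if k = 4 then u 0 * v 3 - u 3 * v 0 + (u 6 * v 1 - u 1 * v 6) + (u 5 * v 2 - u 2 * v 5)
  else if k = 5 then u 6 * v 0 - u 0 * v 6 + (u 2 * v 4 - u 4 * v 2) + (u 3 * v 1 - u 1 * v 3)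
  else u 0 * v 5 - u 5 * v 0 + (u 1 * v 4 - u 4 * v 1) + (u 2 * v 3 - u 3 * v 2)

/-- The hypersurface M_r = S⁶ ∩ {x₇ = r} = {Σᵢ₌₁⁶ xᵢeᵢ + re₇ : Σᵢ₌₁⁶ xᵢ² = 1 - r²}. -/
def Mr (r : ℝ) : Set E7 := {x | x 6 = r ∧ ∑ i : Fin 6, x i.castSucc ^ 2 = 1 - r ^ 2}

/-- The unit normal ν of M_r in S⁶ : ν_x = (r/√(1-r²)) Σᵢ₌₁⁶ xᵢeᵢ - √(1-r²) e₇. -/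
def nu (r : ℝ) (x : E7) : E7 := WithLp.toLp 2 fun i =>
  if i = 6 then -Real.sqrt (1 - r ^ 2) else (r / Real.sqrt (1 - r ^ 2)) * x i

/-- ξ = -N × ν = (1/√(1-r²))(x₆e₁ + x₅e₂ + x₄e₃ - x₃e₄ - x₂e₅ - x₁e₆). -/
def xi (r : ℝ) (x : E7) : E7 := WithLp.toLp 2 fun i =>
  (1 / Real.sqrt (1 - r ^ 2)) *
    (if i = 0 then x 5 else if i = 1 then x 4 else if i = 2 then x 3
     else if i = 3 then -x 2 else if i = 4 then -x 1 else if i = 5 then -x 0 else 0)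

/-- The 1-form η dual to ξ:
η = (1/√(1-r²))(x₆dx₁ + x₅dx₂ + x₄dx₃ - x₃dx₄ - x₂dx₅ - x₁dx₆). -/
def eta (r : ℝ) (x v : E7) : ℝ :=
  (1 / Real.sqrt (1 - r ^ 2)) *
    (x 5 * v 0 + x 4 * v 1 + x 3 * v 2 - x 2 * v 3 - x 1 * v 4 - x 0 * v 5)

/-- dη = -(2/√(1-r²))(dx₁∧dx₆ + dx₂∧dx₅ + dx₃∧dx₄), with the convention
dη(X,Y) = ½(Xη(Y) - Yη(X) - η([X,Y])), i.e. (dxᵢ∧dxⱼ)(u,v) = ½(uᵢvⱼ - uⱼvᵢ). -/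
def deta (r : ℝ) (u v : E7) : ℝ :=
  -(1 / Real.sqrt (1 - r ^ 2)) *
    (u 0 * v 5 - u 5 * v 0 + (u 1 * v 4 - u 4 * v 1) + (u 2 * v 3 - u 3 * v 2))

/-- The tangent space T_xM_r = {v : v₇ = 0, ⟨v,x⟩ = 0} (as a predicate). -/
def TangentMr (x v : E7) : Prop := v 6 = 0 ∧ ⟪v, x⟫ = 0

lemma eta_fderiv (r : ℝ) (v x u : E7) :
    fderiv ℝ (fun z => eta r z v) x u = eta r u v := by
  set c : ℝ := 1 / Real.sqrt (1 - r ^ 2) with hc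
  have hp : ∀ i : Fin 7, HasFDerivAt (fun z : E7 => z i)
      (EuclideanSpace.proj i : E7 →L[ℝ] ℝ) x :=
    fun i => (EuclideanSpace.proj i : E7 →L[ℝ] ℝ).hasFDerivAt
  have h1 := (((((((hp 5).mul_const (v 0)).add ((hp 4).mul_const (v 1))).add
    ((hp 3).mul_const (v 2))).sub ((hp 2).mul_const (v 3))).sub
    ((hp 1).mul_const (v 4))).sub ((hp 0).mul_const (v 5))).const_mul c
  have h2 : HasFDerivAt (fun z : E7 => eta r z v) _ x := h1
  rw [h2.fderiv]
  have hproj : ∀ i : Fin 7, (EuclideanSpace.proj i : E7 →L[ℝ] ℝ) u = u i :=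
    fun _ => rfl
  simp only [ContinuousLinearMap.smul_apply, ContinuousLinearMap.add_apply,
    ContinuousLinearMap.sub_apply, hproj, smul_eq_mul, eta]
  ring

lemma inner_eq (v x : E7) : ⟪v, x⟫ = v 0 * x 0 + v 1 * x 1 + v 2 * x 2
    + v 3 * x 3 + v 4 * x 4 + v 5 * x 5 + v 6 * x 6 := by
  simp [PiLp.inner_apply, RCLike.inner_apply, Fin.sum_univ_seven]
  ring

theorem stmt8 (r : ℝ) (hr : -1 < r ∧ r < 1) :
    (∀ x u v : E7,
      (1 / 2) * (fderiv ℝ (fun z => eta r z v) x u - fderiv ℝ (fun z => eta r z u) x v)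
        = deta r u v) ∧
    ∀ x ∈ Mr r,
      (∃ v : E7, TangentMr x v ∧ eta r x v ≠ 0) ∧
      ∀ v : E7, TangentMr x v → eta r x v = 0 →
        (∀ w : E7, TangentMr x w → eta r x w = 0 → deta r v w = 0) → v = 0 := by
  obtain ⟨hr1, hr2⟩ := hr
  have hpos : 0 < 1 - r ^ 2 := by nlinarith
  have hs : 0 < Real.sqrt (1 - r ^ 2) := Real.sqrt_pos.mpr hpos
  have hs2 : Real.sqrt (1 - r ^ 2) ^ 2 = 1 - r ^ 2 := Real.sq_sqrt hpos.le
  have hc0 : (1 / Real.sqrt (1 - r ^ 2)) > 0 := by positivity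
  constructor
  · intro x u v
    rw [eta_fderiv, eta_fderiv]
    simp only [eta, deta]
    ring
  · intro x hx
    obtain ⟨hx6, hxsum⟩ := hx
    have hsum : x 0 ^ 2 + x 1 ^ 2 + x 2 ^ 2 + x 3 ^ 2 + x 4 ^ 2 + x 5 ^ 2
        = 1 - r ^ 2 := by
      rw [Fin.sum_univ_six] at hxsum
      simpa using hxsum
    constructor
    · refine ⟨xi r x, ⟨by simp [xi], ?_⟩, ?_⟩
      · rw [inner_eq]
        have e0 : xi r x 0 = (1 / Real.sqrt (1 - r ^ 2)) * x 5 := rfl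
        have e1 : xi r x 1 = (1 / Real.sqrt (1 - r ^ 2)) * x 4 := rfl
        have e2 : xi r x 2 = (1 / Real.sqrt (1 - r ^ 2)) * x 3 := rfl
        have e3 : xi r x 3 = (1 / Real.sqrt (1 - r ^ 2)) * (-x 2) := rfl
        have e4 : xi r x 4 = (1 / Real.sqrt (1 - r ^ 2)) * (-x 1) := rfl
        have e5 : xi r x 5 = (1 / Real.sqrt (1 - r ^ 2)) * (-x 0) := rfl
        have e6 : xi r x 6 = (1 / Real.sqrt (1 - r ^ 2)) * 0 := rfl
        rw [e0, e1, e2, e3, e4, e5, e6]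
        ring
      · have e0 : xi r x 0 = (1 / Real.sqrt (1 - r ^ 2)) * x 5 := rfl
        have e1 : xi r x 1 = (1 / Real.sqrt (1 - r ^ 2)) * x 4 := rfl
        have e2 : xi r x 2 = (1 / Real.sqrt (1 - r ^ 2)) * x 3 := rfl
        have e3 : xi r x 3 = (1 / Real.sqrt (1 - r ^ 2)) * (-x 2) := rfl
        have e4 : xi r x 4 = (1 / Real.sqrt (1 - r ^ 2)) * (-x 1) := rfl
        have e5 : xi r x 5 = (1 / Real.sqrt (1 - r ^ 2)) * (-x 0) := rfl
        have : eta r x (xi r x) = 1 := by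
          simp only [eta, e0, e1, e2, e3, e4, e5]
          have hm : Real.sqrt (1 - r ^ 2) * Real.sqrt (1 - r ^ 2) = 1 - r ^ 2 :=
            Real.mul_self_sqrt hpos.le
          have h1 : (1 / Real.sqrt (1 - r ^ 2)) * (1 / Real.sqrt (1 - r ^ 2))
              * (1 - r ^ 2) = 1 := by
            rw [show (1 / Real.sqrt (1 - r ^ 2)) * (1 / Real.sqrt (1 - r ^ 2))
              * (1 - r ^ 2) = (1 - r ^ 2) / (Real.sqrt (1 - r ^ 2) * Real.sqrt (1 - r ^ 2))
              from by ring, hm, div_self (ne_of_gt hpos)]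
          nlinarith [h1, hsum]
        rw [this]; exact one_ne_zero
    · intro v ⟨hv6, hvx⟩ hev hall
      set w : E7 := WithLp.toLp 2 fun i =>
        if i = 0 then -v 5 else if i = 1 then -v 4 else if i = 2 then -v 3
        else if i = 3 then v 2 else if i = 4 then v 1 else if i = 5 then v 0
        else 0 with hw
      have w0 : w 0 = -v 5 := rfl
      have w1 : w 1 = -v 4 := rfl
      have w2 : w 2 = -v 3 := rfl
      have w3 : w 3 = v 2 := rfl
      have w4 : w 4 = v 1 := rfl
      have w5 : w 5 = v 0 := rfl
      have w6 : w 6 = 0 := rfl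
      have hvx' : v 0 * x 0 + v 1 * x 1 + v 2 * x 2 + v 3 * x 3 + v 4 * x 4
          + v 5 * x 5 = 0 := by
        rw [inner_eq] at hvx
        rw [hv6] at hvx
        linarith
      have hev' : x 5 * v 0 + x 4 * v 1 + x 3 * v 2 - x 2 * v 3 - x 1 * v 4
          - x 0 * v 5 = 0 := by
        simp only [eta] at hev
        rcases mul_eq_zero.mp hev with h | h
        · exact absurd h (ne_of_gt hc0)
        · exact h
      have hwx : ⟪w, x⟫ = 0 := by
        rw [inner_eq, w0, w1, w2, w3, w4, w5, w6]
        linarith [hev']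
      have hew : eta r x w = 0 := by
        simp only [eta, w0, w1, w2, w3, w4, w5]
        have : x 5 * -v 5 + x 4 * -v 4 + x 3 * -v 3 - x 2 * v 2 - x 1 * v 1
            - x 0 * v 0 = 0 := by linarith [hvx']
        rw [this, mul_zero]
      have key := hall w ⟨w6, hwx⟩ hew
      simp only [deta, w0, w1, w2, w3, w4, w5] at key
      have hsq : v 0 ^ 2 + v 1 ^ 2 + v 2 ^ 2 + v 3 ^ 2 + v 4 ^ 2 + v 5 ^ 2 = 0 := by
        rcases mul_eq_zero.mp key with h | h
        · exfalso; have := neg_eq_zero.mp h; exact (ne_of_gt hc0) this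
        · linear_combination h
      have h0 : v 0 = 0 :=
        pow_eq_zero_iff two_ne_zero |>.mp (le_antisymm
          (by linarith [sq_nonneg (v 1), sq_nonneg (v 2), sq_nonneg (v 3), sq_nonneg (v 4), sq_nonneg (v 5)]) (sq_nonneg _))
      have h1 : v 1 = 0 :=
        pow_eq_zero_iff two_ne_zero |>.mp (le_antisymm
          (by linarith [sq_nonneg (v 0), sq_nonneg (v 2), sq_nonneg (v 3), sq_nonneg (v 4), sq_nonneg (v 5)]) (sq_nonneg _))
      have h2 : v 2 = 0 :=
        pow_eq_zero_iff two_ne_zero |>.mp (le_antisymm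
          (by linarith [sq_nonneg (v 0), sq_nonneg (v 1), sq_nonneg (v 3), sq_nonneg (v 4), sq_nonneg (v 5)]) (sq_nonneg _))
      have h3 : v 3 = 0 :=
        pow_eq_zero_iff two_ne_zero |>.mp (le_antisymm
          (by linarith [sq_nonneg (v 0), sq_nonneg (v 1), sq_nonneg (v 2), sq_nonneg (v 4), sq_nonneg (v 5)]) (sq_nonneg _))
      have h4 : v 4 = 0 :=
        pow_eq_zero_iff two_ne_zero |>.mp (le_antisymm
          (by linarith [sq_nonneg (v 0), sq_nonneg (v 1), sq_nonneg (v 2), sq_nonneg (v 3), sq_nonneg (v 5)]) (sq_nonneg _))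
      have h5 : v 5 = 0 :=
        pow_eq_zero_iff two_ne_zero |>.mp (le_antisymm
          (by linarith [sq_nonneg (v 0), sq_nonneg (v 1), sq_nonneg (v 2), sq_nonneg (v 3), sq_nonneg (v 4)]) (sq_nonneg _))
      ext i
      fin_cases i
      · exact h0
      · exact h1
      · exact h2
      · exact h3
      · exact h4
      · exact h5
      · exact hv6
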